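/- Every non-trivial welded knot K satisfies c(K) ≥ 3; equivalently, every Gauss code with at most two chords represents the trivial welded knot. -/

import Mathlib

/-!
Gauss codes for welded knots.

A Gauss code is a cyclic word in which each chord label occurs exactly twice,
once as a tail (`isHead = false`) and once as a head (`isHead = true`), both
occurrences carrying the common sign of the chord.  We represent the cyclic
word by a linear list of entries, working up to rotation (`List.rotate`) and
injective relabelling of the chords.
-/

/-- An endpoint of a chord: `(chord label, isHead, sign)`, where `isHead = false`
means a tail (over-passing) endpoint and `isHead = true` a head (under-passing)
endpoint, and the sign `true`/`false` stands for `+1`/`-1`. -/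
abbrev GEntry : Type := ℕ × Bool × Bool

/-- A (linear representative of a cyclic) word of endpoints. -/
abbrev GWord : Type := List GEntry

/-- The set of chord labels occurring in a word. -/
def chordSet (w : GWord) : Set ℕ := {a | ∃ e ∈ w, e.1 = a}

/-- `w` is a Gauss code: every chord label that occurs in `w` occurs exactly
twice, once as a tail and once as a head, with a common sign. -/
def IsGaussCode (w : GWord) : Prop :=
  ∀ a ∈ chordSet w,
    w.countP (fun e => e.1 == a) = 2 ∧
    ∃ s : Bool, (a, false, s) ∈ w ∧ (a, true, s) ∈ w

/-- The crossing change at the set `S` of chords: at every chord of `S`, the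
tail and head markings of its two occurrences are exchanged and its sign is
reversed. -/
def crossingChange (S : Finset ℕ) (w : GWord) : GWord :=
  w.map fun e => if e.1 ∈ S then (e.1, !e.2.1, !e.2.2) else e

/-- Deletion of the chord `a` (both of its endpoints) from the word. -/
def deleteChord (a : ℕ) (w : GWord) : GWord :=
  w.filter fun e => e.1 != a

/-- Equality of words up to cyclic permutation. -/
def RotEq (w w' : GWord) : Prop := ∃ n : ℕ, w' = w.rotate n

/-- Renaming the chords of a word by `f`. -/
def relabelWord (f : ℕ → ℕ) (w : GWord) : GWord := w.map fun e => (f e.1, e.2)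

/-- Equality of words up to cyclic permutation and (injective) renaming of
the chords. -/
def CyclicRename (w w' : GWord) : Prop :=
  ∃ (n : ℕ) (f : ℕ → ℕ), Function.Injective f ∧ w' = relabelWord f (w.rotate n)

/-- Raw C1 move (deleting direction): deletion of a chord whose two endpoints
occupy adjacent positions; the inserting direction is the converse relation. -/
def C1delRaw (u v : GWord) : Prop :=
  ∃ (x y : GWord) (a : ℕ) (h s : Bool),
    (∀ e ∈ x ++ y, e.1 ≠ a) ∧
    u = x ++ (a, h, s) :: (a, !h, s) :: y ∧
    v = x ++ y

/-- Raw W move: interchange of two adjacent endpoints that are both tails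
(of any two chords, regardless of signs). -/
def WRaw (u v : GWord) : Prop :=
  ∃ (x y : GWord) (a b : ℕ) (s t : Bool),
    u = x ++ (a, false, s) :: (b, false, t) :: y ∧
    v = x ++ (b, false, t) :: (a, false, s) :: y

/-- Raw C2 move (deleting direction): deletion of a pair of chords of opposite
signs whose two tails occupy adjacent positions and whose two heads occupy
adjacent positions. -/
def C2delRaw (u v : GWord) : Prop :=
  ∃ (x y z : GWord) (a b : ℕ) (s : Bool),
    a ≠ b ∧
    (∀ e ∈ x ++ y ++ z, e.1 ≠ a ∧ e.1 ≠ b) ∧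
    (u = x ++ (a, false, s) :: (b, false, !s) :: (y ++ (a, true, s) :: (b, true, !s) :: z) ∨
     u = x ++ (a, false, s) :: (b, false, !s) :: (y ++ (b, true, !s) :: (a, true, s) :: z)) ∧
    v = x ++ y ++ z

/-- Raw C3 move: the Gauss-code translation of the planar Reidemeister move of
type 3.  Three strands `A`, `B`, `C` (modelled on the lines `y = -1`, `y = x`,
`y = -x` and their directions `(1,0)`, `(1,1)`, `(-1,1)`, possibly reversed
according to `dA`, `dB`, `dC`) meet pairwise in the chords `a = AB`, `b = AC`,
`c = BC`; `oAB`, `oAC`, `oBC` record which strand passes over in each pair and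
must come from a linear height order.  The six endpoints form three adjacent
pairs, one on each strand, and the move exchanges the order within each pair;
the head/tail pattern is determined by the heights and the signs by the heights
and the directions, as in a planar diagram. -/
def C3Raw (u v : GWord) : Prop :=
  ∃ (x y z t : GWord) (a b c : ℕ) (oAB oAC oBC dA dB dC swap : Bool),
    a ≠ b ∧ a ≠ c ∧ b ≠ c ∧
    (oAB = oBC → oAC = oAB) ∧
    (let sa : Bool := (dA == dB) == oAB
     let sb : Bool := (dA == dC) == oAC
     let sc : Bool := (dB == dC) == oBC
     let PA : GWord :=
       if dA then [(a, !oAB, sa), (b, !oAC, sb)] else [(b, !oAC, sb), (a, !oAB, sa)]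
     let PB : GWord :=
       if dB then [(a, oAB, sa), (c, !oBC, sc)] else [(c, !oBC, sc), (a, oAB, sa)]
     let PC : GWord :=
       if dC then [(b, oAC, sb), (c, oBC, sc)] else [(c, oBC, sc), (b, oAC, sb)]
     let Q1 : GWord := if swap then PC else PB
     let Q2 : GWord := if swap then PB else PC
     u = x ++ PA ++ y ++ Q1 ++ z ++ Q2 ++ t ∧
     v = x ++ PA.reverse ++ y ++ Q1.reverse ++ z ++ Q2.reverse ++ t)

/-- One welded Reidemeister move (C1, C2, C3 or W, in either direction),
performed up to cyclic permutation and renaming of chords. -/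
def WeldedStep (u v : GWord) : Prop :=
  ∃ u₀ v₀ : GWord, CyclicRename u u₀ ∧ CyclicRename v₀ v ∧
    (C1delRaw u₀ v₀ ∨ C1delRaw v₀ u₀ ∨ C2delRaw u₀ v₀ ∨ C2delRaw v₀ u₀ ∨
     C3Raw u₀ v₀ ∨ C3Raw v₀ u₀ ∨ WRaw u₀ v₀)

/-- Welded equivalence: two Gauss codes are welded-equivalent if they are
related by a finite sequence of C1, C2, C3 and W moves (on cyclic words). -/
def WeldedEquiv : GWord → GWord → Prop := Relation.EqvGen WeldedStep

/-- A Gauss code represents the trivial welded knot iff it is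
welded-equivalent to the empty code. -/
def RepresentsTrivial (w : GWord) : Prop := WeldedEquiv w []

/-- One C1 or W move (in either direction), up to cyclic permutation and
renaming of chords. -/
def CWStep (u v : GWord) : Prop :=
  ∃ u₀ v₀ : GWord, CyclicRename u u₀ ∧ CyclicRename v₀ v ∧
    (C1delRaw u₀ v₀ ∨ C1delRaw v₀ u₀ ∨ WRaw u₀ v₀)

/-- Relatedness by a finite sequence of C1 and W moves alone. -/
def CWEquiv : GWord → GWord → Prop := Relation.EqvGen CWStep

/-- One W move, up to cyclic permutation. -/
def WStepRot (u v : GWord) : Prop :=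
  ∃ u₀ v₀ : GWord, RotEq u u₀ ∧ RotEq v₀ v ∧ WRaw u₀ v₀

/-- One deleting C1 move, up to cyclic permutation. -/
def C1StepRot (u v : GWord) : Prop :=
  ∃ u₀ v₀ : GWord, RotEq u u₀ ∧ RotEq v₀ v ∧ C1delRaw u₀ v₀

/-- In the linear word `v`, no chord has its head occurring strictly before
its tail. -/
def TailsFirst (v : GWord) : Prop :=
  ¬ ∃ (x y z : GWord) (a : ℕ) (s s' : Bool),
      v = x ++ (a, true, s) :: (y ++ (a, false, s') :: z)

/-- A Gauss code is descending if the cyclic word can be cut at some point and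
read in one of the two directions so that every chord's tail occurs before its
head. -/
def IsDescending (w : GWord) : Prop :=
  ∃ n : ℕ, TailsFirst (w.rotate n) ∨ TailsFirst ((w.rotate n).reverse)

/-- `c(D)`: the minimal number of chords of a Gauss code representing the same
welded knot as `D`. -/
noncomputable def minCrossing (D : GWord) : ℕ :=
  sInf {n : ℕ | ∃ D' : GWord, IsGaussCode D' ∧ WeldedEquiv D D' ∧ (chordSet D').ncard = n}

/-- `u(D)`: the minimal cardinality of a set `S` of chords of `D` such that the
crossing change at `S` turns `D` into a Gauss code representing the trivial
welded knot. -/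
noncomputable def unknottingNumWord (D : GWord) : ℕ :=
  sInf {k : ℕ | ∃ S : Finset ℕ, ↑S ⊆ chordSet D ∧ S.card = k ∧
    WeldedEquiv (crossingChange S D) []}

/-- `u(K)`: the minimum of `u(D')` over all Gauss codes `D'` representing the
same welded knot as `D`. -/
noncomputable def unknottingNum (D : GWord) : ℕ :=
  sInf {k : ℕ | ∃ D' : GWord, IsGaussCode D' ∧ WeldedEquiv D D' ∧ unknottingNumWord D' = k}

/-! ### Auxiliary lemmas -/

lemma cr_refl (w : GWord) : CyclicRename w w :=
  ⟨0, id, Function.injective_id, by simp [relabelWord]⟩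

lemma exists_fresh (w : GWord) : ∃ a : ℕ, ∀ e ∈ w, e.1 ≠ a := by
  obtain ⟨a, ha⟩ := Infinite.exists_notMem_finset ((w.map Prod.fst).toFinset)
  refine ⟨a, fun e he h => ha ?_⟩
  simp only [List.mem_toFinset, List.mem_map]
  exact ⟨e, he, h⟩

lemma wrel {u v : GWord} (h : WeldedStep u v) : WeldedEquiv u v :=
  Relation.EqvGen.rel _ _ h

lemma wtrans {u v w : GWord} (h1 : WeldedEquiv u v) (h2 : WeldedEquiv v w) :
    WeldedEquiv u w :=
  Relation.EqvGen.trans _ _ _ h1 h2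

lemma equiv_of_cr {w w' : GWord} (h : CyclicRename w w') : WeldedEquiv w w' := by
  obtain ⟨a, ha⟩ := exists_fresh w
  have ha' : ∀ e ∈ ([] : GWord) ++ w, e.1 ≠ a := by simpa using ha
  have h1 : WeldedStep w ((a, false, true) :: (a, true, true) :: w) :=
    ⟨w, (a, false, true) :: (a, true, true) :: w, cr_refl w, cr_refl _,
      Or.inr (Or.inl ⟨[], w, a, false, true, ha', rfl, rfl⟩)⟩
  have h2 : WeldedStep ((a, false, true) :: (a, true, true) :: w) w' :=
    ⟨_, w, cr_refl _, h, Or.inl ⟨[], w, a, false, true, ha', rfl, rfl⟩⟩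
  exact wtrans (wrel h1) (wrel h2)

lemma equiv_rotate (w : GWord) (n : ℕ) : WeldedEquiv w (w.rotate n) :=
  equiv_of_cr ⟨n, id, Function.injective_id, by simp [relabelWord]⟩

lemma c1_step (x y : GWord) (a : ℕ) (h s : Bool) (hxy : ∀ e ∈ x ++ y, e.1 ≠ a) :
    WeldedStep (x ++ (a, h, s) :: (a, !h, s) :: y) (x ++ y) :=
  ⟨_, _, cr_refl _, cr_refl _, Or.inl ⟨x, y, a, h, s, hxy, rfl, rfl⟩⟩

lemma w_step (x y : GWord) (a b : ℕ) (s t : Bool) :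
    WeldedStep (x ++ (a, false, s) :: (b, false, t) :: y)
      (x ++ (b, false, t) :: (a, false, s) :: y) :=
  ⟨_, _, cr_refl _, cr_refl _,
    Or.inr (Or.inr (Or.inr (Or.inr (Or.inr (Or.inr ⟨x, y, a, b, s, t, rfl, rfl⟩)))))⟩

lemma pair_equiv (a : ℕ) (h s : Bool) : WeldedEquiv [(a, h, s), (a, !h, s)] [] :=
  wrel (c1_step [] [] a h s (by simp))

lemma list2 {α : Type*} {l : List α} {x y : α} (hl : l.length = 2) (hx : x ∈ l)
    (hy : y ∈ l) (hxy : x ≠ y) : l = [x, y] ∨ l = [y, x] := by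
  match l, hl with
  | [p, q], _ =>
    simp only [List.mem_cons, List.not_mem_nil, or_false] at hx hy
    rcases hx with rfl | rfl <;> rcases hy with rfl | rfl <;> simp_all

lemma list3 {α : Type*} {l : List α} {x y z : α} (hl : l.length = 3) (hx : x ∈ l)
    (hy : y ∈ l) (hz : z ∈ l) (hxy : x ≠ y) (hxz : x ≠ z) (hyz : y ≠ z) :
    l = [x, y, z] ∨ l = [x, z, y] ∨ l = [y, x, z] ∨ l = [y, z, x] ∨
    l = [z, x, y] ∨ l = [z, y, x] := by
  match l, hl with
  | [p, q, r], _ =>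
    simp only [List.mem_cons, List.not_mem_nil, or_false] at hx hy hz
    rcases hx with rfl | rfl | rfl <;> rcases hy with rfl | rfl | rfl <;>
      rcases hz with rfl | rfl | rfl <;> simp_all

lemma chordSet_eq (w : GWord) : chordSet w = ↑((w.map Prod.fst).toFinset) := by
  ext x
  simp [chordSet]

/-- Every Gauss code with at most two chords represents the trivial welded knot. -/
lemma small_trivial (E : GWord) (hE : IsGaussCode E) (hcard : (chordSet E).ncard ≤ 2) :
    WeldedEquiv E [] := by
  rw [chordSet_eq, Set.ncard_coe_finset] at hcard
  set fs := (E.map Prod.fst).toFinset with hfs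
  have hcases : fs.card = 0 ∨ fs.card = 1 ∨ fs.card = 2 := by omega
  have hmemfs : ∀ e ∈ E, e.1 ∈ fs := by
    intro e he
    simp only [hfs, List.mem_toFinset, List.mem_map]
    exact ⟨e, he, rfl⟩
  have hchord : ∀ a ∈ fs, a ∈ chordSet E := by
    intro a ha
    rw [chordSet_eq]
    exact ha
  rcases hcases with h0 | h1 | h2
  · -- zero chords
    have : fs = ∅ := Finset.card_eq_zero.mp h0
    have hE0 : E = [] := by
      have := List.toFinset_eq_empty_iff (E.map Prod.fst) |>.mp this
      simpa using this
    rw [hE0]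
    exact Relation.EqvGen.refl []
  · -- one chord
    obtain ⟨a, hfa⟩ := Finset.card_eq_one.mp h1
    obtain ⟨hcnt, sa, hTa, hHa⟩ := hE a (hchord a (by simp [hfa]))
    have hall : ∀ e ∈ E, (fun e : GEntry => e.1 == a) e := by
      intro e he
      have := hmemfs e he
      rw [hfa] at this
      simpa using this
    have hlen : E.length = 2 := by
      rw [← List.countP_eq_length.mpr hall, hcnt]
    have hne : ((a, false, sa) : GEntry) ≠ (a, true, sa) := by simp
    rcases list2 hlen hTa hHa hne with hEeq | hEeq <;> rw [hEeq]
    · exact pair_equiv a false sa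
    · exact pair_equiv a true sa
  · -- two chords
    obtain ⟨a, b, hab, hfab⟩ := Finset.card_eq_two.mp h2
    obtain ⟨hcnta, sa, hTa, hHa⟩ := hE a (hchord a (by simp [hfab]))
    obtain ⟨hcntb, sb, hTb, hHb⟩ := hE b (hchord b (by simp [hfab]))
    have hmem : ∀ e ∈ E, e.1 = a ∨ e.1 = b := by
      intro e he
      have := hmemfs e he
      rw [hfab] at this
      simpa using this
    -- length is 4
    have hlen : E.length = 4 := by
      have hsplit := List.length_eq_countP_add_countP (p := fun e : GEntry => e.1 == a) (l := E)
      have hcongr : E.countP (fun e : GEntry => ¬ (e.1 == a)) =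
          E.countP (fun e : GEntry => e.1 == b) := by
        apply List.countP_congr
        intro e he
        rcases hmem e he with h | h <;> simp [h, hab, Ne.symm hab]
      omega
    -- rotate so that the tail of `a` comes first
    obtain ⟨l1, l2, hE12⟩ := List.append_of_mem hTa
    have hrot : E.rotate l1.length = (a, false, sa) :: (l2 ++ l1) := by
      rw [hE12, List.rotate_eq_drop_append_take (by simp)]
      simp
    have hmemrot : ∀ e : GEntry, e ∈ E → e ≠ (a, false, sa) → e ∈ l2 ++ l1 := by
      intro e he hne
      have : e ∈ E.rotate l1.length := List.mem_rotate.mpr he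
      rw [hrot] at this
      rcases List.mem_cons.mp this with h | h
      · exact absurd h hne
      · exact h
    have hHa' : ((a, true, sa) : GEntry) ∈ l2 ++ l1 := hmemrot _ hHa (by simp)
    have hTb' : ((b, false, sb) : GEntry) ∈ l2 ++ l1 := hmemrot _ hTb (by simp [hab, Ne.symm hab])
    have hHb' : ((b, true, sb) : GEntry) ∈ l2 ++ l1 := hmemrot _ hHb (by simp [hab, Ne.symm hab])
    have hlen3 : (l2 ++ l1).length = 3 := by
      have h4 : (E.rotate l1.length).length = 4 := by rw [List.length_rotate]; exact hlen
      rw [hrot] at h4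
      simpa using h4
    have hEquivRot : WeldedEquiv E ((a, false, sa) :: (l2 ++ l1)) := by
      rw [← hrot]; exact equiv_rotate E l1.length
    have hne1 : ((a, true, sa) : GEntry) ≠ (b, false, sb) := by simp [hab]
    have hne2 : ((a, true, sa) : GEntry) ≠ (b, true, sb) := by simp [hab]
    have hne3 : ((b, false, sb) : GEntry) ≠ (b, true, sb) := by simp
    have hba : ∀ e ∈ ([(b, false, sb), (b, true, sb)] : GWord), e.1 ≠ a := by
      simp [Ne.symm hab]
    have hba' : ∀ e ∈ ([(b, true, sb), (b, false, sb)] : GWord), e.1 ≠ a := by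
      simp [Ne.symm hab]
    rcases list3 hlen3 hHa' hTb' hHb' hne1 hne2 hne3 with hr | hr | hr | hr | hr | hr <;>
        rw [hr] at hEquivRot <;> refine wtrans hEquivRot ?_
    · -- [Ta, Ha, Tb, Hb]
      refine wtrans (wrel (c1_step [] [(b, false, sb), (b, true, sb)] a false sa hba)) ?_
      exact pair_equiv b false sb
    · -- [Ta, Ha, Hb, Tb]
      refine wtrans (wrel (c1_step [] [(b, true, sb), (b, false, sb)] a false sa hba')) ?_
      exact pair_equiv b true sb
    · -- [Ta, Tb, Ha, Hb]
      refine wtrans (wrel (w_step [] [(a, true, sa), (b, true, sb)] a b sa sb)) ?_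
      refine wtrans (wrel (c1_step [(b, false, sb)] [(b, true, sb)] a false sa
        (by simp [Ne.symm hab]))) ?_
      exact pair_equiv b false sb
    · -- [Ta, Tb, Hb, Ha]
      refine wtrans (wrel (c1_step [(a, false, sa)] [(a, true, sa)] b false sb
        (by simp [hab]))) ?_
      exact pair_equiv a false sa
    · -- [Ta, Hb, Ha, Tb] ; rotate by 3 to [Tb, Ta, Hb, Ha]
      have hr3 : ([(a, false, sa), (b, true, sb), (a, true, sa), (b, false, sb)] : GWord).rotate 3
          = [(b, false, sb), (a, false, sa), (b, true, sb), (a, true, sa)] := rfl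
      refine wtrans (hr3 ▸ equiv_rotate _ 3) ?_
      refine wtrans (wrel (w_step [] [(b, true, sb), (a, true, sa)] b a sb sa)) ?_
      refine wtrans (wrel (c1_step [(a, false, sa)] [(a, true, sa)] b false sb
        (by simp [hab]))) ?_
      exact pair_equiv a false sa
    · -- [Ta, Hb, Tb, Ha] ; rotate by 3 to [Ha, Ta, Hb, Tb]
      have hr3 : ([(a, false, sa), (b, true, sb), (b, false, sb), (a, true, sa)] : GWord).rotate 3
          = [(a, true, sa), (a, false, sa), (b, true, sb), (b, false, sb)] := rfl
      refine wtrans (hr3 ▸ equiv_rotate _ 3) ?_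
      refine wtrans (wrel (c1_step [] [(b, true, sb), (b, false, sb)] a true sa hba')) ?_
      exact pair_equiv b true sb

/-- Every non-trivial welded knot `K` satisfies `c(K) ≥ 3`:
if a Gauss code `D` is not welded-equivalent to the empty code, then every
Gauss code welded-equivalent to `D` has at least three chords.  Equivalently,
every Gauss code with at most two chords represents the trivial welded knot. -/
theorem nontrivial_crossing_number_ge_three (D : GWord) (hD : IsGaussCode D)
    (hnt : ¬ WeldedEquiv D []) :
    (∀ D' : GWord, IsGaussCode D' → WeldedEquiv D D' → 3 ≤ (chordSet D').ncard) ∧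
    (∀ E : GWord, IsGaussCode E → (chordSet E).ncard ≤ 2 → WeldedEquiv E []) := by
  refine ⟨?_, fun E hE h => small_trivial E hE h⟩
  intro D' hD' hDD'
  by_contra h
  exact hnt (wtrans hDD' (small_trivial D' hD' (by omega)))
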